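/- Let 0 < s < 1 and A > 0. For every f in E^s, the low-frequency piece f_{1,A} = Σ_{2j≠±k, 2|j|+|k| ≤ A} f̂(j,k) e^{i2jx}e^{ikt} satisfies the uniform bound ‖f_{1,A}‖_{C⁰} ≤ c(s) A^{1−s} ‖f‖_{E^s}. -/

import Mathlib

set_option maxHeartbeats 1000000


open Real Complex

theorem aux_sum_rpow (s : ℝ) (hs0 : 0 < s) (hs1 : s < 1) (N : ℕ) :
    ∑ i ∈ Finset.range N, ((i : ℝ) + 1) ^ (-s) ≤ (N : ℝ) ^ (1 - s) / (1 - s) := by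
  have hp : 0 < 1 - s := by linarith
  induction N with
  | zero => simp [Real.zero_rpow hp.ne']
  | succ N ih =>
    rw [Finset.sum_range_succ]
    have hb : (0:ℝ) < (N:ℝ) + 1 := by positivity
    have key : ((N:ℝ)+1) ^ (-s) ≤ (((N:ℝ)+1) ^ (1-s) - (N:ℝ) ^ (1-s)) / (1-s) := by
      rw [le_div_iff₀ hp]
      have hbern := rpow_one_add_le_one_add_mul_self (s := -(1/((N:ℝ)+1))) (p := 1 - s)
        (by rw [neg_le, neg_neg, div_le_one hb]; linarith) (le_of_lt hp) (by linarith)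
      have h1 : (1 : ℝ) + -(1/((N:ℝ)+1)) = (N:ℝ)/((N:ℝ)+1) := by field_simp; ring
      rw [h1] at hbern
      have h2 : ((N:ℝ)/((N:ℝ)+1)) ^ (1-s) = (N:ℝ)^(1-s) / ((N:ℝ)+1)^(1-s) :=
        Real.div_rpow (Nat.cast_nonneg N) hb.le _
      rw [h2, div_le_iff₀ (Real.rpow_pos_of_pos hb _)] at hbern
      have h3 : ((N:ℝ)+1) ^ (-s) * ((N:ℝ)+1) = ((N:ℝ)+1) ^ (1-s) := by
        rw [← Real.rpow_add_one hb.ne' (-s)]; congr 1; ring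
      have h4 : ((N:ℝ)+1)^(1-s) / ((N:ℝ)+1) = ((N:ℝ)+1)^(-s) := by
        rw [← h3]; field_simp
      have h6 : (1 + (1-s)*(-(1/((N:ℝ)+1)))) * ((N:ℝ)+1)^(1-s)
          = ((N:ℝ)+1)^(1-s) - (1-s) * (((N:ℝ)+1)^(1-s)/((N:ℝ)+1)) := by ring
      rw [h6, h4] at hbern
      linarith
    push_cast
    calc ∑ x ∈ Finset.range N, ((x:ℝ) + 1) ^ (-s) + ((N:ℝ)+1) ^ (-s)
        ≤ (N:ℝ)^(1-s)/(1-s) + (((N:ℝ)+1) ^ (1-s) - (N:ℝ) ^ (1-s)) / (1-s) := add_le_add ih key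
      _ = ((N:ℝ)+1)^(1-s)/(1-s) := by ring

/-- Sum of `|m|^(-s)` over nonzero integers in `[-N, N]`. -/
theorem aux_sum_abs_rpow (s : ℝ) (hs0 : 0 < s) (hs1 : s < 1) (N : ℕ) :
    ∑ m ∈ (Finset.Icc (-(N:ℤ)) N).erase 0, ((|m| : ℤ) : ℝ) ^ (-s)
      ≤ 2 * ((N : ℝ) ^ (1 - s) / (1 - s)) := by
  have h1 : (Finset.Icc (-(N:ℤ)) N).erase 0
      = Finset.Icc (-(N:ℤ)) (-1) ∪ Finset.Icc 1 (N:ℤ) := by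
    ext m
    simp only [Finset.mem_erase, Finset.mem_Icc, Finset.mem_union]
    omega
  have hdisj : Disjoint (Finset.Icc (-(N:ℤ)) (-1)) (Finset.Icc 1 (N:ℤ)) := by
    rw [Finset.disjoint_left]
    intro m hm hm'
    simp only [Finset.mem_Icc] at hm hm'
    omega
  have h2 : Finset.Icc (-(N:ℤ)) (-1) = (Finset.Icc (1:ℤ) N).image Neg.neg := by
    ext m
    simp only [Finset.mem_Icc, Finset.mem_image]
    constructor
    · intro hm; exact ⟨-m, by omega, by omega⟩
    · rintro ⟨a, ha, rfl⟩; omega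
  have hposbound : ∑ m ∈ Finset.Icc (1:ℤ) N, ((|m| : ℤ) : ℝ) ^ (-s)
      ≤ (N : ℝ) ^ (1 - s) / (1 - s) := by
    have h3 : Finset.Icc (1:ℤ) (N:ℤ) = (Finset.range N).image (fun i : ℕ => (i : ℤ) + 1) := by
      ext m
      simp only [Finset.mem_Icc, Finset.mem_image, Finset.mem_range]
      constructor
      · intro hm
        refine ⟨(m - 1).toNat, by omega, by omega⟩
      · rintro ⟨a, ha, rfl⟩; omega
    rw [h3, Finset.sum_image (by intro a _ b _ h; simp only at h; omega)]
    refine le_trans (le_of_eq (Finset.sum_congr rfl fun i _ => ?_))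
      (aux_sum_rpow s hs0 hs1 N)
    congr 1
    have : |((i:ℤ) + 1)| = (i:ℤ) + 1 := abs_of_pos (by omega)
    rw [this]
    push_cast
    ring
  rw [h1, Finset.sum_union hdisj, h2, Finset.sum_image (by intro a _ b _ h; omega)]
  have : ∑ m ∈ Finset.Icc (1:ℤ) N, ((|(-m)| : ℤ) : ℝ) ^ (-s)
      = ∑ m ∈ Finset.Icc (1:ℤ) N, ((|m| : ℤ) : ℝ) ^ (-s) := by
    refine Finset.sum_congr rfl fun m _ => ?_
    rw [abs_neg]
  rw [this]
  linarith

/-- Bernstein-type bound for the low-frequency truncation: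
‖f_{1,A}‖_{C⁰} ≤ c(s) A^{1−s} ‖f‖_{E^s}. -/
theorem stmt_7 (s : ℝ) (hs0 : 0 < s) (hs1 : s < 1) :
    ∃ c > 0, ∀ A : ℝ, 0 < A → ∀ fh : ℤ × ℤ → ℂ,
      (∀ j k : ℤ, (2 * j = k ∨ 2 * j = -k) → fh (j, k) = 0) →
      Summable (fun jk : ℤ × ℤ =>
        ((|jk.2 ^ 2 - 4 * jk.1 ^ 2| : ℤ) : ℝ) ^ s * ‖fh jk‖ ^ 2) →
      ∀ x t : ℝ,
        ‖∑' jk : ℤ × ℤ,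
          if 2 * jk.1 ≠ jk.2 ∧ 2 * jk.1 ≠ -jk.2 ∧ ((2 * |jk.1| + |jk.2| : ℤ) : ℝ) ≤ A then
            fh jk * Complex.exp (Complex.I * (2 * jk.1 * x + jk.2 * t))
          else 0‖ ≤
        c * A ^ (1 - s) * Real.sqrt (∑' jk : ℤ × ℤ,
          ((|jk.2 ^ 2 - 4 * jk.1 ^ 2| : ℤ) : ℝ) ^ s * ‖fh jk‖ ^ 2) := by
  have hp : 0 < 1 - s := by linarith
  refine ⟨2 / (1 - s), by positivity, ?_⟩
  intro A hA fh hzero hsum x t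
  classical
  set N : ℕ := ⌊A⌋₊ with hN
  set P : ℤ × ℤ → Prop := fun jk =>
    2 * jk.1 ≠ jk.2 ∧ 2 * jk.1 ≠ -jk.2 ∧ ((2 * |jk.1| + |jk.2| : ℤ) : ℝ) ≤ A with hP
  set w : ℤ × ℤ → ℝ := fun jk => ((|jk.2 ^ 2 - 4 * jk.1 ^ 2| : ℤ) : ℝ) with hw
  -- basic bound: P implies the frequencies live in a box of size N
  have hbox : ∀ jk : ℤ × ℤ, P jk → 2 * |jk.1| + |jk.2| ≤ (N : ℤ) := by
    rintro ⟨j, k⟩ ⟨_, _, hle⟩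
    dsimp only at hle ⊢
    have h4 : (2 * |j| + |k| : ℤ) ≤ ⌊A⌋ := Int.le_floor.mpr hle
    have h5 : ⌊A⌋.toNat = N := Int.floor_toNat A
    have h6 : (0:ℤ) ≤ ⌊A⌋ := Int.floor_nonneg.mpr hA.le
    omega
  set B : Finset (ℤ × ℤ) := (Finset.Icc (-(N:ℤ)) N) ×ˢ (Finset.Icc (-(N:ℤ)) N) with hB
  have hmemB : ∀ jk : ℤ × ℤ, P jk → jk ∈ B := by
    rintro ⟨j, k⟩ hp'
    have hb2 := hbox (j, k) hp'
    simp only at hb2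
    rw [Int.abs_eq_natAbs, Int.abs_eq_natAbs] at hb2
    simp only [hB, Finset.mem_product, Finset.mem_Icc]
    constructor <;> constructor <;> omega
  -- w ≥ 1 on the support
  have hw1 : ∀ jk : ℤ × ℤ, P jk → (1:ℝ) ≤ w jk := by
    rintro ⟨j, k⟩ ⟨h1, h2, _⟩
    have hne : k ^ 2 - 4 * j ^ 2 ≠ 0 := by
      intro h
      have hfac : (k - 2 * j) * (k + 2 * j) = 0 := by ring_nf; linarith [h]
      rcases mul_eq_zero.mp hfac with h' | h' <;> omega
    have : (1:ℤ) ≤ |k ^ 2 - 4 * j ^ 2| := Int.one_le_abs (by exact_mod_cast hne)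
    simp only [hw]
    exact_mod_cast this
  have hw0 : ∀ jk : ℤ × ℤ, (0:ℝ) ≤ w jk := fun jk => by
    simp only [hw]; positivity
  -- the summand is supported in B
  have hF0 : ∀ jk : ℤ × ℤ, jk ∉ B →
      (if P jk then fh jk * Complex.exp (Complex.I * (2 * jk.1 * x + jk.2 * t)) else 0) = 0 := by
    intro jk hjk
    rw [if_neg (fun hp' => hjk (hmemB jk hp'))]
  rw [tsum_eq_sum hF0]
  -- the weight functions for Cauchy-Schwarz
  set u : ℤ × ℤ → ℝ := fun jk => if P jk then (w jk) ^ (-(s/2)) else 0 with hu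
  set v : ℤ × ℤ → ℝ := fun jk => (w jk) ^ (s/2) * ‖fh jk‖ with hv
  have hu0 : ∀ jk, 0 ≤ u jk := by
    intro jk; simp only [hu]; split
    · exact Real.rpow_nonneg (hw0 jk) _
    · exact le_rfl
  have hv0 : ∀ jk, 0 ≤ v jk := by
    intro jk; simp only [hv]; positivity
  -- step 1 : triangle inequality
  have step1 : ‖∑ jk ∈ B,
      (if P jk then fh jk * Complex.exp (Complex.I * (2 * jk.1 * x + jk.2 * t)) else 0)‖
      ≤ ∑ jk ∈ B, u jk * v jk := by
    refine le_trans (norm_sum_le _ _) (Finset.sum_le_sum fun jk _ => ?_)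
    by_cases hPjk : P jk
    · rw [if_pos hPjk]
      have hre : (Complex.I * (2 * jk.1 * x + jk.2 * t)).re = 0 := by simp
      have hexp : ‖Complex.exp (Complex.I * (2 * jk.1 * x + jk.2 * t))‖ = 1 := by
        rw [Complex.norm_exp, hre, Real.exp_zero]
      rw [norm_mul, hexp, mul_one]
      have hwpos : (0:ℝ) < w jk := lt_of_lt_of_le one_pos (hw1 jk hPjk)
      simp only [hu, hv, if_pos hPjk]
      rw [← mul_assoc, ← Real.rpow_add hwpos]
      norm_num
    · rw [if_neg hPjk]
      simp only [norm_zero, hu, if_neg hPjk, zero_mul]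
      exact le_rfl
  -- step 2 : Cauchy-Schwarz
  have hCS := Finset.sum_mul_sq_le_sq_mul_sq B u v
  have huv0 : 0 ≤ ∑ jk ∈ B, u jk * v jk :=
    Finset.sum_nonneg fun jk _ => mul_nonneg (hu0 jk) (hv0 jk)
  have hu2 : 0 ≤ ∑ jk ∈ B, u jk ^ 2 := Finset.sum_nonneg fun jk _ => sq_nonneg _
  have step2 : ∑ jk ∈ B, u jk * v jk
      ≤ Real.sqrt (∑ jk ∈ B, u jk ^ 2) * Real.sqrt (∑ jk ∈ B, v jk ^ 2) := by
    have := Real.sqrt_le_sqrt hCS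
    rwa [Real.sqrt_sq huv0, Real.sqrt_mul hu2] at this
  -- bound on ∑ v²
  have hv2le : ∑ jk ∈ B, v jk ^ 2
      ≤ ∑' jk : ℤ × ℤ, ((|jk.2 ^ 2 - 4 * jk.1 ^ 2| : ℤ) : ℝ) ^ s * ‖fh jk‖ ^ 2 := by
    have heq : ∀ jk : ℤ × ℤ, v jk ^ 2
        = ((|jk.2 ^ 2 - 4 * jk.1 ^ 2| : ℤ) : ℝ) ^ s * ‖fh jk‖ ^ 2 := by
      intro jk
      simp only [hv]
      rw [mul_pow]
      congr 1
      have h7 : ((w jk) ^ (s/2)) ^ 2 = w jk ^ s := by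
        rw [← Real.rpow_natCast ((w jk) ^ (s/2)) 2, ← Real.rpow_mul (hw0 jk)]
        norm_num
      rw [h7, hw]
    calc ∑ jk ∈ B, v jk ^ 2
        = ∑ jk ∈ B, ((|jk.2 ^ 2 - 4 * jk.1 ^ 2| : ℤ) : ℝ) ^ s * ‖fh jk‖ ^ 2 :=
          Finset.sum_congr rfl fun jk _ => heq jk
      _ ≤ _ := Summable.sum_le_tsum B (fun jk _ => by positivity) hsum
  -- counting bound on ∑ u²
  have hu2le : ∑ jk ∈ B, u jk ^ 2 ≤ (2 * ((N:ℝ) ^ (1-s) / (1-s))) ^ 2 := by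
    have hrw : ∀ jk ∈ B.filter P,
        (w jk) ^ (-s) = ((|jk.2 - 2 * jk.1| : ℤ) : ℝ) ^ (-s) * ((|jk.2 + 2 * jk.1| : ℤ) : ℝ) ^ (-s) := by
      rintro ⟨j, k⟩ _
      have hfac : k ^ 2 - 4 * j ^ 2 = (k - 2 * j) * (k + 2 * j) := by ring
      have : w (j, k) = ((|k - 2 * j| : ℤ) : ℝ) * ((|k + 2 * j| : ℤ) : ℝ) := by
        simp only [hw, hfac, abs_mul]
        push_cast
        ring
      rw [this, Real.mul_rpow (by positivity) (by positivity)]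
    have hstep : ∑ jk ∈ B, u jk ^ 2 = ∑ jk ∈ B.filter P, (w jk) ^ (-s) := by
      rw [Finset.sum_filter]
      refine Finset.sum_congr rfl fun jk _ => ?_
      simp only [hu]
      split
      · rw [← Real.rpow_natCast ((w jk) ^ (-(s/2))) 2, ← Real.rpow_mul (hw0 jk)]
        congr 1
        ring
      · rw [pow_two, mul_zero]
    set T : Finset ℤ := (Finset.Icc (-(N:ℤ)) N).erase 0 with hT
    set φ : ℤ × ℤ → ℤ × ℤ := fun jk => (jk.2 - 2 * jk.1, jk.2 + 2 * jk.1) with hφ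
    have hinj : ∀ a ∈ B.filter P, ∀ b ∈ B.filter P, φ a = φ b → a = b := by
      rintro ⟨j1, k1⟩ _ ⟨j2, k2⟩ _ h
      simp only [hφ, Prod.mk.injEq] at h
      obtain ⟨h1, h2⟩ := h
      have : j1 = j2 := by omega
      have : k1 = k2 := by omega
      simp_all
    have hsub : (B.filter P).image φ ⊆ T ×ˢ T := by
      intro p hp'
      rw [Finset.mem_image] at hp'
      obtain ⟨jk, hjk, rfl⟩ := hp'
      rw [Finset.mem_filter] at hjk
      obtain ⟨_, hPjk⟩ := hjk
      have hbnd := hbox jk hPjk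
      rw [Int.abs_eq_natAbs, Int.abs_eq_natAbs] at hbnd
      obtain ⟨h1, h2, _⟩ := hPjk
      obtain ⟨j, k⟩ := jk
      dsimp only at h1 h2 hbnd ⊢
      simp only [hφ, Finset.mem_product, hT, Finset.mem_erase, Finset.mem_Icc]
      constructor
      · constructor
        · omega
        · constructor <;> omega
      · constructor
        · omega
        · constructor <;> omega
    calc ∑ jk ∈ B, u jk ^ 2
        = ∑ jk ∈ B.filter P, (w jk) ^ (-s) := hstep
      _ = ∑ jk ∈ B.filter P,
            ((|(φ jk).1| : ℤ) : ℝ) ^ (-s) * ((|(φ jk).2| : ℤ) : ℝ) ^ (-s) :=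
          Finset.sum_congr rfl fun jk hjk => hrw jk hjk
      _ = ∑ p ∈ (B.filter P).image φ,
            ((|p.1| : ℤ) : ℝ) ^ (-s) * ((|p.2| : ℤ) : ℝ) ^ (-s) :=
          (Finset.sum_image (f := fun p : ℤ × ℤ =>
            ((|p.1| : ℤ) : ℝ) ^ (-s) * ((|p.2| : ℤ) : ℝ) ^ (-s)) hinj).symm
      _ ≤ ∑ p ∈ T ×ˢ T, ((|p.1| : ℤ) : ℝ) ^ (-s) * ((|p.2| : ℤ) : ℝ) ^ (-s) :=
          Finset.sum_le_sum_of_subset_of_nonneg hsub (fun p _ _ => by positivity)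
      _ = (∑ m ∈ T, ((|m| : ℤ) : ℝ) ^ (-s)) * (∑ m ∈ T, ((|m| : ℤ) : ℝ) ^ (-s)) := by
          rw [Finset.sum_product, Finset.sum_mul_sum]
      _ ≤ (2 * ((N:ℝ) ^ (1-s) / (1-s))) ^ 2 := by
          have hTle := aux_sum_abs_rpow s hs0 hs1 N
          have hT0 : 0 ≤ ∑ m ∈ T, ((|m| : ℤ) : ℝ) ^ (-s) :=
            Finset.sum_nonneg fun m _ => by positivity
          rw [sq]
          exact mul_le_mul hTle hTle hT0 (by positivity)
  -- assemble
  have hsqrtu : Real.sqrt (∑ jk ∈ B, u jk ^ 2) ≤ 2 / (1 - s) * A ^ (1 - s) := by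
    refine le_trans (Real.sqrt_le_sqrt hu2le) ?_
    rw [Real.sqrt_sq (by positivity)]
    have hNA : ((N:ℝ)) ≤ A := Nat.floor_le hA.le
    have := Real.rpow_le_rpow (Nat.cast_nonneg N) hNA hp.le
    rw [div_mul_eq_mul_div, mul_div_assoc]
    gcongr
  have hsqrtv : Real.sqrt (∑ jk ∈ B, v jk ^ 2)
      ≤ Real.sqrt (∑' jk : ℤ × ℤ, ((|jk.2 ^ 2 - 4 * jk.1 ^ 2| : ℤ) : ℝ) ^ s * ‖fh jk‖ ^ 2) :=
    Real.sqrt_le_sqrt hv2le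
  calc ‖∑ jk ∈ B,
      (if P jk then fh jk * Complex.exp (Complex.I * (2 * jk.1 * x + jk.2 * t)) else 0)‖
      ≤ ∑ jk ∈ B, u jk * v jk := step1
    _ ≤ Real.sqrt (∑ jk ∈ B, u jk ^ 2) * Real.sqrt (∑ jk ∈ B, v jk ^ 2) := step2
    _ ≤ (2 / (1 - s) * A ^ (1 - s)) *
        Real.sqrt (∑' jk : ℤ × ℤ, ((|jk.2 ^ 2 - 4 * jk.1 ^ 2| : ℤ) : ℝ) ^ s * ‖fh jk‖ ^ 2) :=
      mul_le_mul hsqrtu hsqrtv (Real.sqrt_nonneg _) (by positivity)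
    _ = 2 / (1 - s) * A ^ (1 - s) *
        Real.sqrt (∑' jk : ℤ × ℤ, ((|jk.2 ^ 2 - 4 * jk.1 ^ 2| : ℤ) : ℝ) ^ s * ‖fh jk‖ ^ 2) := by
      ring
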